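/- Given any finite family of bounded nondecreasing functions ν_{ij} : [0,∞) → ℝ with total variation one and any δ > 0, there exists a continuous nonincreasing function g : (-∞,0] → [1,∞) with g(0)=1 and g(s) → ∞ as s → -∞ such that ∫_0^∞ g(-s) dν_{ij}(s) < 1 + δ for all i,j. -/

import Mathlib

open MeasureTheory ENNReal

/-- Given a finite family of Stieltjes (probability) measures on `[0,∞)` and any
`δ > 0`, there is a continuous nonincreasing `g : (-∞,0] → [1,∞)` with `g 0 = 1`
and `g(s) → ∞` as `s → -∞` such that `∫_0^∞ g(-s) dν_{ij}(s) < 1 + δ` for all `i,j`. -/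
theorem stmt4 (m n : ℕ) (ν : Fin m → Fin n → Measure ℝ)
    [∀ i j, IsProbabilityMeasure (ν i j)]
    (hν : ∀ i j, (ν i j) (Set.Iio 0) = 0)
    (δ : ℝ) (hδ : 0 < δ) :
    ∃ g : ℝ → ℝ,
      ContinuousOn g (Set.Iic 0) ∧
      AntitoneOn g (Set.Iic 0) ∧
      (∀ s ≤ (0 : ℝ), 1 ≤ g s) ∧
      g 0 = 1 ∧
      Filter.Tendsto g Filter.atBot Filter.atTop ∧
      ∀ i j, Integrable (fun s => g (-s)) (ν i j) ∧
        ∫ s, g (-s) ∂(ν i j) < 1 + δ := by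
  -- Step 1: tails are uniformly small
  have tail : ∀ ε : ℝ≥0∞, 0 < ε → ∃ T : ℝ, ∀ i j, ν i j (Set.Ici T) ≤ ε := by
    intro ε hε
    have key : ∀ i j, ∃ t : ℝ, ν i j (Set.Ici t) ≤ ε := by
      intro i j
      have hι : (⋂ k : ℕ, Set.Ici (k : ℝ)) = (∅ : Set ℝ) := by
        ext x
        simp only [Set.mem_iInter, Set.mem_Ici, Set.mem_empty_iff_false, iff_false, not_forall,
          not_le]
        obtain ⟨k, hk⟩ := exists_nat_gt x
        exact ⟨k, hk⟩
      have htend : Filter.Tendsto (fun k : ℕ => ν i j (Set.Ici (k : ℝ)))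
          Filter.atTop (nhds 0) := by
        have := tendsto_measure_iInter_atTop (μ := ν i j)
          (s := fun k : ℕ => Set.Ici (k : ℝ))
          (fun k => measurableSet_Ici.nullMeasurableSet)
          (fun k l hkl => Set.Ici_subset_Ici.2 (by exact_mod_cast hkl))
          ⟨0, measure_ne_top _ _⟩
        rwa [hι, measure_empty] at this
      obtain ⟨k, hk⟩ := (htend.eventually_lt_const hε).exists
      exact ⟨(k : ℝ), hk.le⟩
    choose t ht using fun p : Fin m × Fin n => key p.1 p.2
    refine ⟨((Finset.univ.sup fun p : Fin m × Fin n => ⌈t p⌉₊ : ℕ) : ℝ), fun i j => ?_⟩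
    refine le_trans (measure_mono (Set.Ici_subset_Ici.2 ?_)) (ht (i, j))
    calc t (i, j) ≤ (⌈t (i, j)⌉₊ : ℝ) := Nat.le_ceil _
      _ ≤ _ := Nat.cast_le.2 (Finset.le_sup (f := fun p => ⌈t p⌉₊) (Finset.mem_univ (i, j)))
  -- Step 2: choose thresholds a k
  have hex : ∀ k : ℕ, ∃ b : ℝ, (k : ℝ) ≤ b ∧
      ∀ i j, ν i j (Set.Ici b) ≤ ENNReal.ofReal (δ / 2) * 2⁻¹ ^ (k + 1) := by
    intro k
    have hpos : (0 : ℝ≥0∞) < ENNReal.ofReal (δ / 2) * 2⁻¹ ^ (k + 1) := by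
      exact ENNReal.mul_pos (ENNReal.ofReal_pos.mpr (by linarith)).ne'
        (pow_ne_zero _ (ENNReal.inv_ne_zero.mpr ENNReal.ofNat_ne_top))
    obtain ⟨T, hT⟩ := tail _ hpos
    refine ⟨max (k : ℝ) T, le_max_left _ _, fun i j => ?_⟩
    exact le_trans (measure_mono (Set.Ici_subset_Ici.2 (le_max_right _ _))) (hT i j)
  choose a ha1 ha2 using hex
  -- Step 3: the building blocks
  set f : ℕ → ℝ → ℝ := fun k t => max 0 (min 1 (t - a k)) with hf_def
  have hf_cont : ∀ k, Continuous (f k) := fun k =>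
    continuous_const.max (continuous_const.min (continuous_id.sub continuous_const))
  have hf_mono : ∀ k, Monotone (f k) := by
    intro k x y hxy
    exact max_le_max le_rfl (min_le_min le_rfl (by linarith))
  have hf_nonneg : ∀ k t, 0 ≤ f k t := fun k t => le_max_left _ _
  have hf_le_one : ∀ k t, f k t ≤ 1 := fun k t =>
    max_le zero_le_one (min_le_left _ _)
  have hf_zero : ∀ k t, t ≤ a k → f k t = 0 := fun k t ht =>
    max_eq_left ((min_le_right _ _).trans (by linarith))
  have hf_one : ∀ k t, a k + 1 ≤ t → f k t = 1 := by
    intro k t ht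
    have : min 1 (t - a k) = 1 := min_eq_left (by linarith)
    simp [hf_def, this]
  -- Step 4: the sum u
  set u : ℝ → ℝ := fun t => ∑' k, f k t with hu_def
  have hu_sum : ∀ (t : ℝ) (N : ℕ), t ≤ (N : ℝ) → u t = ∑ k ∈ Finset.range N, f k t := by
    intro t N htN
    refine tsum_eq_sum fun k hk => hf_zero k t ?_
    have hNk : N ≤ k := le_of_not_gt fun h => hk (Finset.mem_range.mpr h)
    calc t ≤ (N : ℝ) := htN
      _ ≤ (k : ℝ) := by exact_mod_cast hNk
      _ ≤ a k := ha1 k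
  have hu_mono : Monotone u := by
    intro x y hxy
    rw [hu_sum x ⌈y⌉₊ (hxy.trans (Nat.le_ceil _)), hu_sum y ⌈y⌉₊ (Nat.le_ceil _)]
    exact Finset.sum_le_sum fun k _ => hf_mono k hxy
  have hu_nonneg : ∀ t, 0 ≤ u t := fun t => tsum_nonneg fun k => hf_nonneg k t
  have hu_zero : u 0 = 0 := by
    rw [hu_sum 0 0 (by norm_num)]
    simp
  have hu_cont : Continuous u := by
    rw [continuous_iff_continuousAt]
    intro t
    set N : ℕ := ⌈t⌉₊ + 1 with hN
    have htN : t < (N : ℝ) := lt_of_le_of_lt (Nat.le_ceil _) (by exact_mod_cast Nat.lt_succ_self _)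
    have hmem : Set.Iio (N : ℝ) ∈ nhds t := Iio_mem_nhds htN
    refine ContinuousAt.congr
      ((continuous_finset_sum (Finset.range N) fun k _ => hf_cont k).continuousAt) ?_
    exact Filter.eventuallyEq_of_mem hmem fun x hx => (hu_sum x N (le_of_lt hx)).symm
  have hu_tend : Filter.Tendsto u Filter.atTop Filter.atTop := by
    rw [Filter.tendsto_atTop_atTop]
    intro b
    set C : ℕ := ⌈b⌉₊ with hC
    refine ⟨∑ k ∈ Finset.range C, (a k + 1), fun t ht => ?_⟩
    have hterm : ∀ k < C, a k + 1 ≤ t := by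
      intro k hk
      refine le_trans ?_ ht
      refine Finset.single_le_sum (f := fun k => a k + 1) (fun l _ => ?_) (Finset.mem_range.2 hk)
      have := (Nat.cast_nonneg l : (0:ℝ) ≤ l).trans (ha1 l)
      show (0:ℝ) ≤ a l + 1
      linarith
    set N : ℕ := max C ⌈t⌉₊ with hNdef
    have htN : t ≤ (N : ℝ) := le_trans (Nat.le_ceil _) (by exact_mod_cast le_max_right C ⌈t⌉₊)
    calc b ≤ (C : ℝ) := Nat.le_ceil _
      _ = ∑ k ∈ Finset.range C, f k t := by
          rw [Finset.sum_congr rfl fun k hk => hf_one k t (hterm k (Finset.mem_range.mp hk))]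
          simp
      _ ≤ ∑ k ∈ Finset.range N, f k t := by
          refine Finset.sum_le_sum_of_subset_of_nonneg
            (Finset.range_subset_range.2 (le_max_left _ _)) fun k _ _ => hf_nonneg k t
      _ = u t := (hu_sum t N htN).symm
  -- Step 5: lintegral bound for u
  have hlint : ∀ i j, ∫⁻ t, ENNReal.ofReal (u t) ∂(ν i j) ≤ ENNReal.ofReal (δ / 2) := by
    intro i j
    have hsummable : ∀ t : ℝ, Summable fun k => f k t := by
      intro t
      refine summable_of_ne_finset_zero (s := Finset.range ⌈t⌉₊) fun k hk => ?_
      refine hf_zero k t ?_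
      have hNk : ⌈t⌉₊ ≤ k := le_of_not_gt fun h => hk (Finset.mem_range.mpr h)
      calc t ≤ (⌈t⌉₊ : ℝ) := Nat.le_ceil _
        _ ≤ (k : ℝ) := by exact_mod_cast hNk
        _ ≤ a k := ha1 k
    have heq : ∀ t : ℝ, ENNReal.ofReal (u t) = ∑' k, ENNReal.ofReal (f k t) := by
      intro t
      exact ENNReal.ofReal_tsum_of_nonneg (fun k => hf_nonneg k t) (hsummable t)
    calc ∫⁻ t, ENNReal.ofReal (u t) ∂(ν i j)
        = ∫⁻ t, ∑' k, ENNReal.ofReal (f k t) ∂(ν i j) := by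
          simp only [heq]
      _ = ∑' k, ∫⁻ t, ENNReal.ofReal (f k t) ∂(ν i j) :=
          lintegral_tsum fun k => ((hf_cont k).measurable.ennreal_ofReal).aemeasurable
      _ ≤ ∑' k, ENNReal.ofReal (δ / 2) * 2⁻¹ ^ (k + 1) := by
          refine ENNReal.tsum_le_tsum fun k => ?_
          calc ∫⁻ t, ENNReal.ofReal (f k t) ∂(ν i j)
              ≤ ∫⁻ t, (Set.Ici (a k)).indicator (fun _ => (1 : ℝ≥0∞)) t ∂(ν i j) := by
                refine lintegral_mono fun t => ?_
                by_cases ht : a k ≤ t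
                · simp only [Set.indicator_of_mem (Set.mem_Ici.2 ht)]
                  exact ENNReal.ofReal_le_one.mpr (hf_le_one k t)
                · push_neg at ht
                  rw [hf_zero k t ht.le]
                  simp
            _ = ν i j (Set.Ici (a k)) := lintegral_indicator_one measurableSet_Ici
            _ ≤ ENNReal.ofReal (δ / 2) * 2⁻¹ ^ (k + 1) := ha2 k i j
      _ = ENNReal.ofReal (δ / 2) := by
          rw [ENNReal.tsum_mul_left, ENNReal.tsum_geometric_add_one, ENNReal.one_sub_inv_two,
            inv_inv]
          rw [show (2⁻¹ : ℝ≥0∞) * 2 = 1 by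
            rw [ENNReal.inv_mul_cancel (by norm_num) ENNReal.ofNat_ne_top], mul_one]
  -- Step 6: integrability and integral bound
  have hu_int : ∀ i j, Integrable u (ν i j) := by
    intro i j
    refine ⟨hu_cont.aestronglyMeasurable, ?_⟩
    rw [hasFiniteIntegral_iff_ofReal (Filter.Eventually.of_forall hu_nonneg)]
    exact lt_of_le_of_lt (hlint i j) ENNReal.ofReal_lt_top
  have hint_lt : ∀ i j, ∫ t, u t ∂(ν i j) ≤ δ / 2 := by
    intro i j
    rw [integral_eq_lintegral_of_nonneg_ae (Filter.Eventually.of_forall hu_nonneg)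
      hu_cont.aestronglyMeasurable]
    calc (∫⁻ t, ENNReal.ofReal (u t) ∂(ν i j)).toReal
        ≤ (ENNReal.ofReal (δ / 2)).toReal :=
          ENNReal.toReal_mono ENNReal.ofReal_ne_top (hlint i j)
      _ = δ / 2 := ENNReal.toReal_ofReal (by linarith)
  -- Step 7: assemble
  refine ⟨fun s => 1 + u (-s), ?_, ?_, ?_, ?_, ?_, ?_⟩
  · exact (continuous_const.add (hu_cont.comp continuous_neg)).continuousOn
  · intro x _ y _ hxy
    exact add_le_add le_rfl (hu_mono (neg_le_neg hxy))
  · intro s _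
    have := hu_nonneg (-s)
    show 1 ≤ 1 + u (-s)
    linarith
  · simp [hu_zero]
  · exact Filter.tendsto_atTop_add_const_left _ _
      (hu_tend.comp (Filter.tendsto_neg_atBot_atTop))
  · intro i j
    have hfun : (fun s : ℝ => 1 + u (-(-s))) = fun s => 1 + u s := by
      funext s; rw [neg_neg]
    constructor
    · rw [hfun]
      exact (integrable_const 1).add (hu_int i j)
    · rw [hfun]
      rw [integral_add (integrable_const 1) (hu_int i j), integral_const]
      simp only [Measure.real, measure_univ, ENNReal.toReal_one, smul_eq_mul, one_mul]
      have := hint_lt i j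
      linarith
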